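/- Equivalence of log-det maximization and matrix projection: Let R ≻ 0 (n×n Hermitian positive definite), H ∈ ℂ^{n×n} nonsingular, and P_T > 0. Then the unique maximizer X* of log det(R + H X Hᴴ) over {X ⪰ 0 : Tr(X) ≤ P_T} coincides with the unique minimizer of ‖X − X₀‖_F² over {X ⪰ 0 : Tr(X) = P_T}, where X₀ = −(Hᴴ R⁻¹ H)⁻¹. -/

import Mathlib

open scoped ComplexOrder Matrix

/-- Frobenius norm of a complex matrix. -/
noncomputable def frobNorm {n m : ℕ} (X : Matrix (Fin n) (Fin m) ℂ) : ℝ :=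
  Real.sqrt (∑ i, ∑ j, ‖X i j‖ ^ 2)

namespace LogDetAux

open Matrix Polynomial
set_option linter.unusedSectionVars false

variable {m : Type*} [Fintype m] [DecidableEq m]

lemma aux_smul_psd {c : ℝ} (hc : 0 ≤ c) {A : Matrix m m ℂ} (hA : A.PosSemidef) :
    ((c:ℂ) • A).PosSemidef := by
  refine PosSemidef.of_dotProduct_mulVec_nonneg ?_ ?_
  · unfold Matrix.IsHermitian
    rw [conjTranspose_smul, hA.1.eq]
    congr 1
    simp [Complex.ext_iff]
  · intro x
    rw [smul_mulVec, dotProduct_smul]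
    exact smul_nonneg (by exact_mod_cast Complex.zero_le_real.mpr hc) (hA.dotProduct_mulVec_nonneg x)

lemma aux_trace_real {A : Matrix m m ℂ} (hA : A.IsHermitian) :
    A.trace = (A.trace.re : ℂ) := by
  have h : star A.trace = A.trace := by
    rw [← Matrix.trace_conjTranspose, hA.eq]
  rw [Complex.ext_iff]
  constructor
  · simp
  · have := congrArg Complex.im h
    simp at this ⊢
    linarith

lemma aux_trace_nonneg {A : Matrix m m ℂ} (hA : A.PosSemidef) : 0 ≤ A.trace.re := by
  have h : ∀ i, 0 ≤ A i i := fun i => by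
    have := hA.dotProduct_mulVec_nonneg (Pi.single i 1)
    simpa [dotProduct, Pi.single_apply, apply_ite] using this
  have : (0:ℂ) ≤ A.trace := Finset.sum_nonneg (fun i _ => h i)
  exact_mod_cast (Complex.le_def.mp this).1

lemma aux_trace_pos {A : Matrix m m ℂ} [Nonempty m] (hA : A.PosDef) : 0 < A.trace.re := by
  have h : ∀ i, 0 < A i i := fun i => by
    have := hA.dotProduct_mulVec_pos (x := Pi.single i 1) (by
      intro h0
      have := congrFun h0 i
      simp [Pi.single_apply] at this)
    have e : star (Pi.single i 1) ⬝ᵥ (A *ᵥ Pi.single i 1) = A i i := by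
      simp [dotProduct, Pi.single_apply, apply_ite]
    rw [e] at this
    exact this
  have : (0:ℂ) < A.trace := by
    have hne : (Finset.univ : Finset m).Nonempty := Finset.univ_nonempty
    obtain ⟨i, hi⟩ := hne
    calc (0:ℂ) < A i i := h i
    _ ≤ A.trace := by
      rw [Matrix.trace]
      exact Finset.single_le_sum (f := fun j => A.diag j) (fun j _ => (h j).le) hi
  exact (Complex.lt_def.mp this).1

lemma aux_trace_cTm (M : Matrix m m ℂ) :
    (Mᴴ * M).trace = ((∑ i, ∑ j, Complex.normSq (M i j) : ℝ) : ℂ) := by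
  rw [Matrix.trace]
  push_cast
  rw [Finset.sum_comm]
  congr 1; ext j
  simp only [Matrix.diag_apply, Matrix.mul_apply, Matrix.conjTranspose_apply]
  congr 1; ext i
  rw [Complex.normSq_eq_conj_mul_self]; rfl

lemma aux_cTm_zero {M : Matrix m m ℂ} (h : (Mᴴ * M).trace = 0) : M = 0 := by
  rw [aux_trace_cTm] at h
  have h2 : (∑ i, ∑ j, Complex.normSq (M i j) : ℝ) = 0 := by exact_mod_cast h
  ext i j
  have := (Finset.sum_eq_zero_iff_of_nonneg (fun i _ => Finset.sum_nonneg
    (fun j _ => Complex.normSq_nonneg _))).mp h2 i (Finset.mem_univ i)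
  have := (Finset.sum_eq_zero_iff_of_nonneg (fun j _ => Complex.normSq_nonneg _)).mp this j
    (Finset.mem_univ j)
  simpa using Complex.normSq_eq_zero.mp this

open scoped MatrixOrder in
lemma aux_trace_mul_nonneg {A B : Matrix m m ℂ} (hA : A.PosSemidef) (hB : B.PosSemidef) :
    0 ≤ (A * B).trace := by
  have hs : CFC.sqrt A * CFC.sqrt A = A :=
    CFC.sqrt_mul_sqrt_self A (Matrix.nonneg_iff_posSemidef.mpr hA)
  set a := CFC.sqrt A with ha
  have haH : aᴴ = a := (Matrix.nonneg_iff_posSemidef.mp (CFC.sqrt_nonneg A)).1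
  have key : (A * B).trace = (a * B * aᴴ).trace := by
    rw [haH, ← hs, mul_assoc, Matrix.trace_mul_comm]
  rw [key]
  have hpsd : (a * B * aᴴ).PosSemidef := hB.mul_mul_conjTranspose_same a
  calc (0:ℂ) = ((0:ℝ):ℂ) := by norm_num
  _ ≤ _ := by
    rw [aux_trace_real hpsd.1]
    exact_mod_cast aux_trace_nonneg hpsd

open scoped MatrixOrder in
lemma aux_trace_mul_eq_zero {A B : Matrix m m ℂ} (hA : A.PosSemidef) (hB : B.PosSemidef)
    (h : (A * B).trace = 0) : A * B = 0 := by
  have hsa : CFC.sqrt A * CFC.sqrt A = A :=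
    CFC.sqrt_mul_sqrt_self A (Matrix.nonneg_iff_posSemidef.mpr hA)
  have hsb : CFC.sqrt B * CFC.sqrt B = B :=
    CFC.sqrt_mul_sqrt_self B (Matrix.nonneg_iff_posSemidef.mpr hB)
  set a := CFC.sqrt A with ha
  set b := CFC.sqrt B with hb
  have haH : aᴴ = a := (Matrix.nonneg_iff_posSemidef.mp (CFC.sqrt_nonneg A)).1
  have hbH : bᴴ = b := (Matrix.nonneg_iff_posSemidef.mp (CFC.sqrt_nonneg B)).1
  have key : ((a*b)ᴴ * (a*b)).trace = (A * B).trace := by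
    rw [conjTranspose_mul, haH, hbH, ← hsa, ← hsb]
    have e1 : (b*a)*(a*b) = b*((a*a)*b) := by noncomm_ring
    rw [e1, Matrix.trace_mul_comm, mul_assoc]
  have hab : a * b = 0 := aux_cTm_zero (by rw [key, h])
  calc A * B = a * (a * b) * b := by rw [← hsa, ← hsb]; noncomm_ring
  _ = 0 := by rw [hab]; simp

section spectral
variable {B : Matrix m m ℂ} (hB : B.IsHermitian)

/-- conjugation of a real diagonal by the eigenvector unitary -/
noncomputable def cdiag (hB : B.IsHermitian) (f : m → ℝ) : Matrix m m ℂ :=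
  (hB.eigenvectorUnitary : Matrix m m ℂ) * diagonal (fun i => (f i : ℂ))
    * (hB.eigenvectorUnitary : Matrix m m ℂ)ᴴ

lemma cdiag_psd (f : m → ℝ) (hf : ∀ i, 0 ≤ f i) : (cdiag hB f).PosSemidef :=
  (Matrix.PosSemidef.diagonal (fun i => by
    simpa using Complex.zero_le_real.mpr (hf i))).mul_mul_conjTranspose_same _

lemma cdiag_sub (f g : m → ℝ) : cdiag hB f - cdiag hB g = cdiag hB (f - g) := by
  unfold cdiag
  rw [← sub_mul, ← mul_sub, Matrix.diagonal_sub]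
  congr 2
  ext i
  push_cast
  simp

lemma cdiag_mul (f g : m → ℝ) : cdiag hB f * cdiag hB g = cdiag hB (f * g) := by
  unfold cdiag
  set U := (hB.eigenvectorUnitary : Matrix m m ℂ) with hUdef
  have hu : Uᴴ * U = 1 := by
    simpa [Matrix.star_eq_conjTranspose] using
      (Matrix.mem_unitaryGroup_iff'.mp hB.eigenvectorUnitary.2)
  have e : U * diagonal (fun i => (f i : ℂ)) * Uᴴ * (U * diagonal (fun i => (g i : ℂ)) * Uᴴ)
      = U * (diagonal (fun i => (f i : ℂ)) * (Uᴴ * U) * diagonal (fun i => (g i : ℂ))) * Uᴴ := by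
    noncomm_ring
  rw [e, hu, mul_one, Matrix.diagonal_mul_diagonal]
  congr 2
  ext i
  push_cast
  simp

lemma cdiag_const (c : ℝ) : cdiag hB (fun _ => c) = (c:ℂ) • 1 := by
  unfold cdiag
  have hu : (hB.eigenvectorUnitary : Matrix m m ℂ) * (hB.eigenvectorUnitary : Matrix m m ℂ)ᴴ = 1 := by
    simpa [Matrix.star_eq_conjTranspose] using
      (Matrix.mem_unitaryGroup_iff.mp hB.eigenvectorUnitary.2)
  rw [← Matrix.smul_one_eq_diagonal, mul_smul_comm, smul_mul_assoc, mul_one, hu]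

lemma cdiag_eigen : cdiag hB hB.eigenvalues = B := by
  unfold cdiag
  rw [← Matrix.star_eq_conjTranspose]
  exact (hB.spectral_theorem).symm

lemma cdiag_inv (f : m → ℝ) (hf : ∀ i, f i ≠ 0) (h : cdiag hB f = B) :
    B⁻¹ = cdiag hB f⁻¹ := by
  apply Matrix.inv_eq_right_inv
  have e : B * cdiag hB f⁻¹ = cdiag hB f * cdiag hB f⁻¹ := by rw [h]
  rw [e, cdiag_mul]
  have : f * f⁻¹ = fun _ => (1:ℝ) := by
    ext i; simp [hf i, mul_inv_cancel₀]
  rw [this]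
  have := cdiag_const hB 1
  simpa using this

end spectral

lemma aux_smul_one_sub_psd {B : Matrix m m ℂ} (hB : B.IsHermitian) (μ : ℝ)
    (h : ∀ i, hB.eigenvalues i ≤ μ) : ((μ:ℂ) • 1 - B).PosSemidef := by
  have e : (μ:ℂ) • (1 : Matrix m m ℂ) - B
      = cdiag hB ((fun _ => μ) - hB.eigenvalues) := by
    rw [← cdiag_sub, cdiag_const, cdiag_eigen]
  rw [e]
  exact cdiag_psd hB _ (fun i => by simpa [sub_nonneg] using h i)

lemma aux_inv_sub_psd {B : Matrix m m ℂ} (hB : B.PosDef) (μ : ℝ)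
    (h : ∀ i, hB.1.eigenvalues i ≤ μ) : (B⁻¹ - ((μ⁻¹:ℝ):ℂ) • 1).PosSemidef := by
  have hev : ∀ i, 0 < hB.1.eigenvalues i := hB.eigenvalues_pos
  have hinv : B⁻¹ = cdiag hB.1 (hB.1.eigenvalues)⁻¹ :=
    cdiag_inv hB.1 _ (fun i => (hev i).ne') (cdiag_eigen hB.1)
  have e : B⁻¹ - ((μ⁻¹:ℝ):ℂ) • 1 = cdiag hB.1 ((hB.1.eigenvalues)⁻¹ - fun _ => μ⁻¹) := by
    rw [hinv, ← cdiag_sub, cdiag_const]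
  rw [e]
  refine cdiag_psd _ _ (fun i => ?_)
  have : μ⁻¹ ≤ (hB.1.eigenvalues i)⁻¹ := by
    gcongr
    · exact hev i
    · exact h i
  simpa [sub_nonneg] using this

lemma outer_psd (v : m → ℂ) : (vecMulVec v (star v)).PosSemidef := by
  refine PosSemidef.of_dotProduct_mulVec_nonneg ?_ ?_
  · ext i j
    simp [vecMulVec_apply, conjTranspose_apply, mul_comm]
  · intro x
    have e : star x ⬝ᵥ (vecMulVec v (star v) *ᵥ x)
        = star (star v ⬝ᵥ x) * (star v ⬝ᵥ x) := by
      simp only [dotProduct, mulVec, vecMulVec_apply, Pi.star_apply, star_sum, star_mul',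
        star_star, Finset.mul_sum, Finset.sum_mul]
      rw [Finset.sum_comm]
      congr 1; ext i; congr 1; ext j
      ring
    rw [e]
    exact star_mul_self_nonneg _

lemma outer_trace (v : m → ℂ) :
    (vecMulVec v (star v)).trace = ((∑ i, Complex.normSq (v i) : ℝ) : ℂ) := by
  rw [Matrix.trace]
  push_cast
  congr 1; ext i
  simp [vecMulVec_apply, Complex.mul_conj]

lemma trace_mul_outer (Bm : Matrix m m ℂ) (v : m → ℂ) :
    (Bm * vecMulVec v (star v)).trace = star v ⬝ᵥ (Bm *ᵥ v) := by
  simp only [Matrix.trace, Matrix.diag_apply, Matrix.mul_apply, vecMulVec_apply,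
    dotProduct, mulVec, Pi.star_apply]
  congr 1; ext k; rw [Finset.mul_sum]
  congr 1; ext j
  ring

lemma aux_det_re_pos {Y : Matrix m m ℂ} (hY : Y.PosDef) :
    Y.det = (Y.det.re : ℂ) ∧ 0 < Y.det.re := by
  have h := hY.det_pos
  rw [Complex.lt_def] at h
  constructor
  · rw [Complex.ext_iff]; simp [← h.2.symm]; exact h.2.symm ▸ rfl
  · simpa using h.1

lemma aux_VI {Y D : Matrix m m ℂ} (hY : Y.PosDef)
    (h : ∀ t : ℝ, t ∈ Set.Icc (0:ℝ) 1 → (Y + (t:ℂ) • D).det.re ≤ Y.det.re) :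
    (Y⁻¹ * D).trace.re ≤ 0 := by
  set C := Y⁻¹ * D with hC
  have hYu : IsUnit Y.det := hY.det_pos.ne'.isUnit
  have hfac : ∀ t : ℝ, Y + (t:ℂ) • D = Y * (1 + (t:ℂ) • C) := by
    intro t
    rw [mul_add, mul_one, mul_smul_comm, hC, ← mul_assoc, Matrix.mul_nonsing_inv _ hYu, one_mul]
  obtain ⟨hdet_eq, hdet_pos⟩ := aux_det_re_pos hY
  set Q : Polynomial ℂ := (det (1 + (X : ℂ[X]) • C.map Polynomial.C)).divX.divX with hQ
  have hexp : ∀ t : ℝ, (Y + (t:ℂ) • D).det.re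
      = Y.det.re * (1 + C.trace.re * t + (Q.eval (t:ℂ)).re * t^2) := by
    intro t
    rw [hfac t, Matrix.det_mul, Matrix.det_one_add_smul, ← hQ]
    rw [hdet_eq]
    simp [Complex.mul_re, Complex.add_re, Complex.one_re, Complex.one_im, Complex.mul_im,
      Complex.ofReal_re, Complex.ofReal_im, ← Complex.ofReal_pow]
    try ring
  have key : ∀ t : ℝ, t ∈ Set.Ioc (0:ℝ) 1 → C.trace.re ≤ -(t * (Q.eval (t:ℂ)).re) := by
    intro t ht
    have h1 := h t ⟨ht.1.le, ht.2⟩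
    rw [hexp t] at h1
    have h2 : C.trace.re * t ≤ (-(t * (Q.eval (t:ℂ)).re)) * t := by nlinarith
    exact le_of_mul_le_mul_right h2 ht.1
  have hcont : Filter.Tendsto (fun t : ℝ => -(t * (Q.eval (t:ℂ)).re))
      (nhdsWithin 0 (Set.Ioi 0)) (nhds 0) := by
    have hc : Continuous (fun t : ℝ => -(t * (Q.eval (t:ℂ)).re)) := by
      have : Continuous fun t : ℝ => Q.eval (t:ℂ) :=
        Q.continuous_aeval.comp Complex.continuous_ofReal |>.congr (fun x => rfl) |>.comp
          continuous_id
      fun_prop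
    have := hc.tendsto 0
    simpa using this.mono_left nhdsWithin_le_nhds
  refine ge_of_tendsto hcont ?_
  filter_upwards [Ioc_mem_nhdsGT_of_mem (Set.mem_Ico.mpr ⟨le_refl 0, zero_lt_one⟩)] with t ht
  exact key t ht

lemma aux_pd_conj {M : Matrix m m ℂ} (hM : M.PosDef) {E : Matrix m m ℂ} (hE : IsUnit E.det) :
    (Eᴴ * M * E).PosDef := by
  refine PosDef.of_dotProduct_mulVec_pos (Matrix.isHermitian_conjTranspose_mul_mul E hM.1) (fun x hx => ?_)
  have hinj : Function.Injective E.mulVec :=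
    Matrix.mulVec_injective_iff_isUnit.mpr ((Matrix.isUnit_iff_isUnit_det E).mpr hE)
  have hxE : E *ᵥ x ≠ 0 := by
    intro h0
    exact hx (hinj (by simpa using h0))
  simpa only [star_mulVec, dotProduct_mulVec, vecMul_vecMul] using hM.dotProduct_mulVec_pos hxE

lemma frob_expand (E F : Matrix m m ℂ) :
    (∑ i, ∑ j, Complex.normSq ((E + F) i j))
      = (∑ i, ∑ j, Complex.normSq (E i j)) + (∑ i, ∑ j, Complex.normSq (F i j))
        + 2 * (Fᴴ * E).trace.re := by
  have htr : (Fᴴ * E).trace.re = ∑ i, ∑ j, (E i j * (starRingEnd ℂ) (F i j)).re := by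
    rw [Matrix.trace]
    rw [Complex.re_sum]
    rw [Finset.sum_comm]
    congr 1; ext j
    rw [Matrix.diag_apply, Matrix.mul_apply, Complex.re_sum]
    congr 1; ext i
    rw [Matrix.conjTranspose_apply]
    congr 1
    exact mul_comm _ _
  rw [htr]
  rw [Finset.mul_sum, ← Finset.sum_add_distrib, ← Finset.sum_add_distrib]
  congr 1; ext i
  rw [Finset.mul_sum, ← Finset.sum_add_distrib, ← Finset.sum_add_distrib]
  congr 1; ext j
  simpa using Complex.normSq_add (E i j) (F i j)

end LogDetAux

open LogDetAux Matrix

set_option maxHeartbeats 2000000 in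
theorem logdet_max_eq_projection {n : ℕ}
    (R H : Matrix (Fin n) (Fin n) ℂ) (hR : R.PosDef) (hH : IsUnit H.det)
    (PT : ℝ) (hPT : 0 < PT)
    (Xm Xp : Matrix (Fin n) (Fin n) ℂ)
    (hXmMem : Xm.PosSemidef ∧ Xm.trace.re ≤ PT)
    (hXmMax : ∀ X : Matrix (Fin n) (Fin n) ℂ, X.PosSemidef → X.trace.re ≤ PT →
      Real.log (R + H * X * Hᴴ).det.re ≤ Real.log (R + H * Xm * Hᴴ).det.re)
    (hXpMem : Xp.PosSemidef ∧ Xp.trace = (PT : ℂ))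
    (hXpMin : ∀ X : Matrix (Fin n) (Fin n) ℂ, X.PosSemidef → X.trace = (PT : ℂ) →
      frobNorm (Xp - (-(Hᴴ * R⁻¹ * H)⁻¹)) ^ 2 ≤ frobNorm (X - (-(Hᴴ * R⁻¹ * H)⁻¹)) ^ 2) :
    Xm = Xp := by
  rcases Nat.eq_zero_or_pos n with hn | hn
  · subst hn
    ext i j
    exact i.elim0
  haveI : Nonempty (Fin n) := ⟨⟨0, hn⟩⟩
  obtain ⟨hXm, hXmtr⟩ := hXmMem
  obtain ⟨hXp, hXptr⟩ := hXpMem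
  have hRdet : IsUnit R.det := hR.det_pos.ne'.isUnit
  have hHHdet : IsUnit Hᴴ.det := by
    rw [Matrix.det_conjTranspose]
    exact hH.star
  -- A = Hᴴ R⁻¹ H and N = A⁻¹
  set A : Matrix (Fin n) (Fin n) ℂ := Hᴴ * R⁻¹ * H with hAdef
  have hApd : A.PosDef := by
    rw [hAdef]
    exact aux_pd_conj hR.inv hH
  have hNpd : A⁻¹.PosDef := hApd.inv
  set N : Matrix (Fin n) (Fin n) ℂ := A⁻¹ with hNdef
  -- factorization  R + H X Hᴴ = H (X + N) Hᴴ
  have hHNH : H * N * Hᴴ = R := by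
    have h1 : N = H⁻¹ * (R * Hᴴ⁻¹) := by
      rw [hNdef, hAdef, Matrix.mul_inv_rev, Matrix.mul_inv_rev,
        Matrix.nonsing_inv_nonsing_inv _ hRdet]
    rw [h1, ← mul_assoc, Matrix.mul_nonsing_inv _ hH, one_mul, mul_assoc,
      Matrix.nonsing_inv_mul _ hHHdet, mul_one]
  have hfact : ∀ Z : Matrix (Fin n) (Fin n) ℂ, R + H * Z * Hᴴ = H * (Z + N) * Hᴴ := by
    intro Z
    rw [mul_add, add_mul, hHNH, add_comm]
  -- determinant comparison
  set k : ℝ := Complex.normSq H.det with hkdef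
  have hkpos : 0 < k := by
    rw [hkdef]
    exact Complex.normSq_pos.mpr (by
      intro h0
      exact (hH.ne_zero h0 : False))
  have hdet : ∀ Z : Matrix (Fin n) (Fin n) ℂ,
      (R + H * Z * Hᴴ).det = ((k:ℝ):ℂ) * (Z + N).det := by
    intro Z
    rw [hfact Z, Matrix.det_mul, Matrix.det_mul, Matrix.det_conjTranspose, hkdef]
    rw [show (star H.det) = (starRingEnd ℂ) H.det from rfl, ← Complex.mul_conj]
    ring
  have hpdZ : ∀ Z : Matrix (Fin n) (Fin n) ℂ, Z.PosSemidef → (Z + N).PosDef :=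
    fun Z hZ => Matrix.PosDef.posSemidef_add hZ hNpd
  have hdet_re : ∀ Z : Matrix (Fin n) (Fin n) ℂ, Z.PosSemidef →
      (R + H * Z * Hᴴ).det.re = k * (Z + N).det.re := by
    intro Z hZ
    rw [hdet Z]
    obtain ⟨he, _⟩ := aux_det_re_pos (hpdZ Z hZ)
    rw [he]
    rw [← Complex.ofReal_mul]
    simp
  -- maximality transferred to determinants
  have hmax' : ∀ Z : Matrix (Fin n) (Fin n) ℂ, Z.PosSemidef → Z.trace.re ≤ PT →
      (Z + N).det.re ≤ (Xm + N).det.re := by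
    intro Z hZ hZtr
    have h1 := hXmMax Z hZ hZtr
    rw [hdet_re Z hZ, hdet_re Xm hXm] at h1
    have hz := (aux_det_re_pos (hpdZ Z hZ)).2
    have hm := (aux_det_re_pos (hpdZ Xm hXm)).2
    have h2 : k * (Z + N).det.re ≤ k * (Xm + N).det.re :=
      (Real.log_le_log_iff (by positivity) (by positivity)).mp h1
    exact le_of_mul_le_mul_left h2 hkpos
  -- variational inequality
  set Ym : Matrix (Fin n) (Fin n) ℂ := Xm + N with hYmdef
  have hYmpd : Ym.PosDef := hpdZ Xm hXm
  have hVI : ∀ Z : Matrix (Fin n) (Fin n) ℂ, Z.PosSemidef → Z.trace.re ≤ PT →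
      (Ym⁻¹ * (Z - Xm)).trace.re ≤ 0 := by
    intro Z hZ hZtr
    apply aux_VI hYmpd
    intro t ht
    have hXt : Xm + (t:ℂ) • (Z - Xm) = ((1 - t : ℝ):ℂ) • Xm + ((t:ℝ):ℂ) • Z := by
      push_cast
      module
    have hXtpsd : (Xm + (t:ℂ) • (Z - Xm)).PosSemidef := by
      rw [hXt]
      exact (aux_smul_psd (by linarith [ht.2]) hXm).add (aux_smul_psd ht.1 hZ)
    have hXttr : (Xm + (t:ℂ) • (Z - Xm)).trace.re ≤ PT := by
      rw [hXt]
      rw [Matrix.trace_add, Matrix.trace_smul, Matrix.trace_smul]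
      have e1 : ((1 - t : ℝ):ℂ) • Xm.trace + ((t:ℝ):ℂ) • Z.trace
          = ((1 - t : ℝ):ℂ) * Xm.trace + ((t:ℝ):ℂ) * Z.trace := by
        simp [smul_eq_mul]
      rw [e1]
      simp only [Complex.add_re, Complex.mul_re, Complex.ofReal_re, Complex.ofReal_im]
      have h1 : (1 - t) * Xm.trace.re ≤ (1 - t) * PT :=
        mul_le_mul_of_nonneg_left hXmtr (by linarith [ht.2])
      have h2 : t * Z.trace.re ≤ t * PT := mul_le_mul_of_nonneg_left hZtr ht.1
      nlinarith
    have := hmax' _ hXtpsd hXttr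
    have e2 : Xm + (t:ℂ) • (Z - Xm) + N = Ym + (t:ℂ) • (Z - Xm) := by
      rw [hYmdef]; abel
    rw [e2] at this
    exact this
  -- trace of Xm is PT
  have hBpd : Ym⁻¹.PosDef := hYmpd.inv
  have htrXm : Xm.trace.re = PT := by
    by_contra hne
    have hlt : Xm.trace.re < PT := lt_of_le_of_ne hXmtr hne
    set ε : ℝ := (PT - Xm.trace.re) / n with hεdef
    have hεpos : 0 < ε := by
      apply div_pos (by linarith)
      exact_mod_cast hn
    have hZpsd : (Xm + (ε:ℂ) • 1).PosSemidef := hXm.add (aux_smul_psd hεpos.le .one)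
    have hZtr : (Xm + (ε:ℂ) • 1).trace.re ≤ PT := by
      rw [Matrix.trace_add, Matrix.trace_smul, Matrix.trace_one]
      simp only [Complex.add_re, smul_eq_mul]
      have : ((ε:ℂ) * (Fintype.card (Fin n) : ℂ)).re = ε * n := by
        push_cast
        simp [Complex.mul_re]
      rw [this, hεdef]
      have hn' : (0:ℝ) < n := by exact_mod_cast hn
      field_simp
      linarith
    have hv := hVI _ hZpsd hZtr
    have he : Xm + (ε:ℂ) • 1 - Xm = (ε:ℂ) • 1 := by abel
    rw [he] at hv
    have : (Ym⁻¹ * ((ε:ℂ) • 1)).trace.re = ε * Ym⁻¹.trace.re := by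
      rw [mul_smul_comm, mul_one, Matrix.trace_smul]
      simp [Complex.mul_re, smul_eq_mul]
    rw [this] at hv
    have htr := aux_trace_pos hBpd
    nlinarith
  have htrXmC : Xm.trace = (PT:ℂ) := by
    rw [aux_trace_real hXm.1, htrXm]
  -- KKT via top eigenvalue of B = Ym⁻¹
  have hBH : Ym⁻¹.IsHermitian := hBpd.1
  obtain ⟨i₀, -, hμeq⟩ := Finset.exists_mem_eq_sup' (Finset.univ_nonempty (α := Fin n))
    hBH.eigenvalues
  set μ : ℝ := Finset.univ.sup' Finset.univ_nonempty hBH.eigenvalues with hμdef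
  have hμi : μ = hBH.eigenvalues i₀ := hμeq
  have hμpos : 0 < μ := hμi ▸ hBpd.eigenvalues_pos i₀
  have hμub : ∀ i, hBH.eigenvalues i ≤ μ := fun i =>
    Finset.le_sup' hBH.eigenvalues (Finset.mem_univ i)
  set v : Fin n → ℂ := ⇑(hBH.eigenvectorBasis i₀) with hvdef
  have hvnorm : (∑ i, Complex.normSq (v i) : ℝ) = 1 := by
    have h1 : ‖hBH.eigenvectorBasis i₀‖ = 1 := hBH.eigenvectorBasis.orthonormal.1 i₀
    have h2 := EuclideanSpace.norm_eq (hBH.eigenvectorBasis i₀)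
    rw [h1] at h2
    have h3 : (∑ i, ‖hBH.eigenvectorBasis i₀ i‖ ^ 2) = 1 := by
      have := congrArg (fun x : ℝ => x ^ 2) h2.symm
      simpa [Real.sq_sqrt (Finset.sum_nonneg fun i _ => sq_nonneg _)] using this
    rw [← h3]
    congr 1; ext i
    rw [Complex.normSq_eq_norm_sq]
  have hmulv : Ym⁻¹ *ᵥ v = (μ:ℂ) • v := by
    rw [hvdef, hμi]
    have := hBH.mulVec_eigenvectorBasis i₀
    rw [this]
    ext j
    simp [Complex.real_smul]
  set E : Matrix (Fin n) (Fin n) ℂ := vecMulVec v (star v) with hEdef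
  have hEpsd : E.PosSemidef := outer_psd v
  have hEtr : E.trace = 1 := by
    rw [hEdef, outer_trace, hvnorm]
    norm_num
  -- VI applied to PT • E
  have hPTE : ((PT:ℂ) • E).PosSemidef := aux_smul_psd hPT.le hEpsd
  have hPTEtr : ((PT:ℂ) • E).trace.re ≤ PT := by
    rw [Matrix.trace_smul, hEtr]
    simp
  have hv1 := hVI _ hPTE hPTEtr
  have hBXmub : (Ym⁻¹ * Xm).trace.re ≤ μ * PT := by
    have hS : ((μ:ℂ) • 1 - Ym⁻¹).PosSemidef := aux_smul_one_sub_psd hBH μ hμub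
    have h0 := aux_trace_mul_nonneg hS hXm
    have he : ((μ:ℂ) • 1 - Ym⁻¹) * Xm = (μ:ℂ) • Xm - Ym⁻¹ * Xm := by
      rw [sub_mul, smul_mul_assoc, one_mul]
    rw [he, Matrix.trace_sub, Matrix.trace_smul, htrXmC] at h0
    have h1 := (Complex.le_def.mp h0).1
    simp only [Complex.sub_re, Complex.zero_re, smul_eq_mul, Complex.mul_re,
      Complex.ofReal_re, Complex.ofReal_im] at h1
    nlinarith
  have hBXmlb : μ * PT ≤ (Ym⁻¹ * Xm).trace.re := by
    have he : Ym⁻¹ * ((PT:ℂ) • E - Xm) = (PT:ℂ) • (Ym⁻¹ * E) - Ym⁻¹ * Xm := by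
      rw [mul_sub, mul_smul_comm]
    rw [he, Matrix.trace_sub, Matrix.trace_smul] at hv1
    have htrE : (Ym⁻¹ * E).trace = (μ:ℂ) := by
      rw [hEdef, trace_mul_outer, hmulv]
      rw [dotProduct_smul]
      have : star v ⬝ᵥ v = ((∑ i, Complex.normSq (v i) : ℝ) : ℂ) := by
        push_cast
        rw [dotProduct]
        congr 1; ext i
        rw [Complex.normSq_eq_conj_mul_self]
        rfl
      rw [this, hvnorm]
      simp
    rw [htrE] at hv1
    simp only [Complex.sub_re, smul_eq_mul, Complex.mul_re, Complex.ofReal_re,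
      Complex.ofReal_im] at hv1
    nlinarith
  -- equality trace((μ1 - B) Xm) = 0 hence (μ1 - B) Xm = 0
  have hS : ((μ:ℂ) • 1 - Ym⁻¹).PosSemidef := aux_smul_one_sub_psd hBH μ hμub
  have hSXm : ((μ:ℂ) • 1 - Ym⁻¹) * Xm = 0 := by
    apply aux_trace_mul_eq_zero hS hXm
    have h0 := aux_trace_mul_nonneg hS hXm
    have he : ((μ:ℂ) • 1 - Ym⁻¹) * Xm = (μ:ℂ) • Xm - Ym⁻¹ * Xm := by
      rw [sub_mul, smul_mul_assoc, one_mul]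
    have hre : (((μ:ℂ) • 1 - Ym⁻¹) * Xm).trace.re = 0 := by
      rw [he, Matrix.trace_sub, Matrix.trace_smul, htrXmC]
      simp only [Complex.sub_re, smul_eq_mul, Complex.mul_re, Complex.ofReal_re,
        Complex.ofReal_im]
      nlinarith [hBXmub, hBXmlb]
    have him := (Complex.le_def.mp h0).2
    rw [Complex.ext_iff]
    constructor
    · exact hre
    · simpa using him.symm
  have hBXm : Ym⁻¹ * Xm = (μ:ℂ) • Xm := by
    have := hSXm
    rw [sub_mul, smul_mul_assoc, one_mul, sub_eq_zero] at this
    exact this.symm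
  -- Ym Xm = μ⁻¹ Xm
  have hYmu : IsUnit Ym.det := hYmpd.det_pos.ne'.isUnit
  have hYmXm : Ym * Xm = ((μ⁻¹:ℝ):ℂ) • Xm := by
    have h1 : Ym * (Ym⁻¹ * Xm) = Xm := by
      rw [← mul_assoc, Matrix.mul_nonsing_inv _ hYmu, one_mul]
    rw [hBXm, mul_smul_comm] at h1
    have hμne : ((μ:ℝ):ℂ) ≠ 0 := by
      exact_mod_cast Complex.ofReal_ne_zero.mpr hμpos.ne'
    calc Ym * Xm = ((μ⁻¹:ℝ):ℂ) • ((μ:ℂ) • (Ym * Xm)) := by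
          rw [smul_smul]
          push_cast
          rw [inv_mul_cancel₀ hμne, one_smul]
    _ = ((μ⁻¹:ℝ):ℂ) • Xm := by rw [h1]
  -- Ym ⪰ μ⁻¹ I
  have hYminv : (Ym - ((μ⁻¹:ℝ):ℂ) • 1).PosSemidef := by
    have h1 := aux_inv_sub_psd hBpd μ hμub
    have h2 : Ym⁻¹⁻¹ = Ym := Matrix.nonsing_inv_nonsing_inv _ hYmu
    rw [h2] at h1
    exact h1
  -- optimality of Xm for the projection problem
  have hgopt : ∀ Z : Matrix (Fin n) (Fin n) ℂ, Z.PosSemidef → Z.trace = (PT:ℂ) →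
      0 ≤ (Ym * (Z - Xm)).trace.re := by
    intro Z hZ hZtr
    have h0 := aux_trace_mul_nonneg hYminv hZ
    have he : (Ym - ((μ⁻¹:ℝ):ℂ) • 1) * Z = Ym * Z - ((μ⁻¹:ℝ):ℂ) • Z := by
      rw [sub_mul, smul_mul_assoc, one_mul]
    rw [he, Matrix.trace_sub, Matrix.trace_smul, hZtr] at h0
    have h1 := (Complex.le_def.mp h0).1
    simp only [Complex.sub_re, Complex.zero_re, smul_eq_mul, Complex.mul_re,
      Complex.ofReal_re, Complex.ofReal_im] at h1
    have htrYmXm : (Ym * Xm).trace.re = μ⁻¹ * PT := by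
      rw [hYmXm, Matrix.trace_smul, htrXmC]
      simp [Complex.mul_re, smul_eq_mul]
    rw [mul_sub, Matrix.trace_sub]
    simp only [Complex.sub_re]
    rw [htrYmXm]
    nlinarith
  -- conclude via Frobenius expansion
  set X₀ : Matrix (Fin n) (Fin n) ℂ := -(Hᴴ * R⁻¹ * H)⁻¹ with hX0def
  have hX0 : X₀ = -N := by rw [hX0def, hNdef, hAdef]
  have hfs : ∀ M : Matrix (Fin n) (Fin n) ℂ,
      frobNorm M ^ 2 = ∑ i, ∑ j, Complex.normSq (M i j) := by
    intro M
    rw [frobNorm, Real.sq_sqrt (Finset.sum_nonneg fun i _ => Finset.sum_nonneg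
      fun j _ => sq_nonneg _)]
    congr 1; ext i; congr 1; ext j
    rw [Complex.normSq_eq_norm_sq]
  have hmin := hXpMin Xm hXm htrXmC
  rw [hfs, hfs] at hmin
  have hsplit : Xp - X₀ = (Xp - Xm) + (Xm - X₀) := by abel
  have hXmX0 : Xm - X₀ = Ym := by rw [hX0, hYmdef]; abel
  have hexp := frob_expand (Xp - Xm) (Xm - X₀)
  rw [← hsplit] at hexp
  have hcross : 0 ≤ ((Xm - X₀)ᴴ * (Xp - Xm)).trace.re := by
    rw [hXmX0, hYmpd.1.eq]
    exact hgopt Xp hXp hXptr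
  have hzero : (∑ i, ∑ j, Complex.normSq ((Xp - Xm) i j)) ≤ 0 := by
    have hXmfr : (∑ i, ∑ j, Complex.normSq ((Xm - X₀) i j))
        = (∑ i, ∑ j, Complex.normSq ((Xm - X₀) i j)) := rfl
    nlinarith [hmin, hexp, hcross]
  have hall : ∀ i j, Complex.normSq ((Xp - Xm) i j) = 0 := by
    intro i j
    have h1 := (Finset.sum_eq_zero_iff_of_nonneg (fun i _ => Finset.sum_nonneg
      (fun j _ => Complex.normSq_nonneg _))).mp
      (le_antisymm hzero (Finset.sum_nonneg fun i _ => Finset.sum_nonneg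
        fun j _ => Complex.normSq_nonneg _)) i (Finset.mem_univ i)
    exact (Finset.sum_eq_zero_iff_of_nonneg (fun j _ => Complex.normSq_nonneg _)).mp h1 j
      (Finset.mem_univ j)
  have : Xp - Xm = 0 := by
    ext i j
    simpa using Complex.normSq_eq_zero.mp (hall i j)
  have := sub_eq_zero.mp this
  exact this.symm
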